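/- For integers a and b, the group Π(a, 1, 1, 1) is isomorphic to Π(b, 1, 1, 1) if and only if |a| = |b|. -/

import Mathlib

/-- The relator set of the presentation
`⟨s₁, s₂, s₃ ∣ s₁s₂s₁⁻¹ = s₃^a s₂^ε, s₁s₃s₁⁻¹ = s₃^{ε₁}, s₂s₃s₂⁻¹ = s₃^{ε₂}⟩`. -/
def PiRels (a ε ε₁ ε₂ : ℤ) : Set (FreeGroup (Fin 3)) :=
  { FreeGroup.of 0 * FreeGroup.of 1 * (FreeGroup.of 0)⁻¹ * FreeGroup.of 1 ^ (-ε) *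
      FreeGroup.of 2 ^ (-a),
    FreeGroup.of 0 * FreeGroup.of 2 * (FreeGroup.of 0)⁻¹ * FreeGroup.of 2 ^ (-ε₁),
    FreeGroup.of 1 * FreeGroup.of 2 * (FreeGroup.of 1)⁻¹ * FreeGroup.of 2 ^ (-ε₂) }

/-- The group `Π(a, ε, ε₁, ε₂)` with presentation
`⟨s₁, s₂, s₃ ∣ s₁s₂s₁⁻¹ = s₃^a s₂^ε, s₁s₃s₁⁻¹ = s₃^{ε₁}, s₂s₃s₂⁻¹ = s₃^{ε₂}⟩`. -/
abbrev PiGroup (a ε ε₁ ε₂ : ℤ) : Type := PresentedGroup (PiRels a ε ε₁ ε₂)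
lemma rel_eq_one {α : Type*} {rels : Set (FreeGroup α)} {r : FreeGroup α} (h : r ∈ rels) :
    PresentedGroup.mk rels r = 1 := by
  have : r ∈ Subgroup.normalClosure rels := Subgroup.subset_normalClosure h
  exact (QuotientGroup.eq_one_iff _).mpr this

section rels
variable (c : ℤ)
local notation "g" => (PresentedGroup.of : Fin 3 → PiGroup c 1 1 1)

lemma rel1 : g 0 * g 1 * (g 0)⁻¹ * (g 1)⁻¹ * (g 2) ^ (-c) = 1 := by
  have := rel_eq_one (rels := PiRels c 1 1 1) (r := FreeGroup.of 0 * FreeGroup.of 1 *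
    (FreeGroup.of 0)⁻¹ * FreeGroup.of 1 ^ (-(1:ℤ)) * FreeGroup.of 2 ^ (-c)) (by left; rfl)
  simpa [map_mul, map_zpow, map_inv, PresentedGroup.of] using this

lemma rel2 : g 0 * g 2 * (g 0)⁻¹ * (g 2)⁻¹ = 1 := by
  have := rel_eq_one (rels := PiRels c 1 1 1) (r := FreeGroup.of 0 * FreeGroup.of 2 *
    (FreeGroup.of 0)⁻¹ * FreeGroup.of 2 ^ (-(1:ℤ))) (by right; left; rfl)
  simpa [map_mul, map_zpow, map_inv, PresentedGroup.of] using this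

lemma rel3 : g 1 * g 2 * (g 1)⁻¹ * (g 2)⁻¹ = 1 := by
  have := rel_eq_one (rels := PiRels c 1 1 1) (r := FreeGroup.of 1 * FreeGroup.of 2 *
    (FreeGroup.of 1)⁻¹ * FreeGroup.of 2 ^ (-(1:ℤ))) (by right; right; rfl)
  simpa [map_mul, map_zpow, map_inv, PresentedGroup.of] using this
end rels

section neg
variable (c d : ℤ)

lemma negMap_rels (h : c = -d) : ∀ r ∈ PiRels c 1 1 1,
    FreeGroup.lift (![PresentedGroup.of 0, (PresentedGroup.of 1)⁻¹, PresentedGroup.of 2] :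
      Fin 3 → PiGroup d 1 1 1) r = 1 := by
  subst h
  set g : Fin 3 → PiGroup d 1 1 1 := PresentedGroup.of with hg
  have h1 := rel1 d
  have h3 := rel3 d
  have hc : Commute (g 1) (g 2) := by
    rw [Commute, SemiconjBy, ← mul_inv_eq_one (a := g 1 * g 2)]
    simpa [mul_assoc] using h3
  rintro r (rfl | rfl | rfl) <;>
    simp only [map_mul, map_zpow, map_inv, FreeGroup.lift_apply_of, Matrix.cons_val_zero,
      Matrix.cons_val_one, Matrix.head_cons, Matrix.cons_val_two, Matrix.tail_cons, neg_neg]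
  · -- g0 * g1⁻¹ * g0⁻¹ * (g1⁻¹)^(-1) * g2^d = 1
    have hA : (g 0 * g 1 * (g 0)⁻¹) * ((g 1)⁻¹ * (g 2) ^ (-d)) = 1 := by
      rw [← mul_assoc]; exact h1
    have hX : g 0 * g 1 * (g 0)⁻¹ = ((g 1)⁻¹ * (g 2) ^ (-d))⁻¹ :=
      eq_inv_of_mul_eq_one_left hA
    have hcz : (g 2) ^ (-d) * g 1 = g 1 * (g 2) ^ (-d) := (hc.zpow_right (-d)).symm.eq
    calc g 0 * (g 1)⁻¹ * (g 0)⁻¹ * ((g 1)⁻¹) ^ (-(1:ℤ)) * (g 2) ^ d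
        = (g 0 * g 1 * (g 0)⁻¹)⁻¹ * g 1 * (g 2) ^ d := by group
      _ = (((g 1)⁻¹ * (g 2) ^ (-d))⁻¹)⁻¹ * g 1 * (g 2) ^ d := by rw [hX]
      _ = (g 1)⁻¹ * ((g 2) ^ (-d) * g 1) * (g 2) ^ d := by group
      _ = (g 1)⁻¹ * (g 1 * (g 2) ^ (-d)) * (g 2) ^ d := by rw [hcz]
      _ = 1 := by group
  · simpa using rel2 d
  · -- g1⁻¹ * g2 * (g1⁻¹)⁻¹ * g2⁻¹ = 1
    have hcz : g 2 * g 1 = g 1 * g 2 := hc.symm.eq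
    calc (g 1)⁻¹ * g 2 * ((g 1)⁻¹)⁻¹ * (g 2) ^ (-(1:ℤ))
        = ((g 1)⁻¹ * (g 2 * g 1)) * (g 2)⁻¹ := by group
      _ = ((g 1)⁻¹ * (g 1 * g 2)) * (g 2)⁻¹ := by rw [hcz]
      _ = 1 := by group

def negHom (h : c = -d) : PiGroup c 1 1 1 →* PiGroup d 1 1 1 :=
  PresentedGroup.toGroup (negMap_rels c d h)

def negEquiv : PiGroup c 1 1 1 ≃* PiGroup (-c) 1 1 1 := by
  refine MonoidHom.toMulEquiv (negHom c (-c) (neg_neg c).symm) (negHom (-c) c (by ring)) ?_ ?_ <;>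
  · refine PresentedGroup.ext fun i => ?_
    fin_cases i <;>
      simp [negHom, PresentedGroup.toGroup.of, MonoidHom.comp_apply, map_inv]
end neg

section count
variable {α : Type*} (rels : Set (FreeGroup α)) (G : Type*) [Group G]

/-- Homs out of a presented group correspond to functions killing the relators. -/
def homEquiv : (PresentedGroup rels →* G) ≃
    {f : α → G // ∀ r ∈ rels, FreeGroup.lift f r = 1} where
  toFun φ := ⟨fun x => φ (PresentedGroup.of x), by
    intro r hr
    have key : (FreeGroup.lift fun x => φ (PresentedGroup.of x)) =
        φ.comp (PresentedGroup.mk rels) :=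
      FreeGroup.ext_hom _ _ (fun x => by simp [PresentedGroup.of])
    rw [key]
    simp [MonoidHom.comp_apply, rel_eq_one hr]⟩
  invFun p := PresentedGroup.toGroup p.2
  left_inv φ := MonoidHom.ext fun x =>
    (PresentedGroup.toGroup.unique _ φ (fun _ => rfl) (x := x)).symm
  right_inv p := Subtype.ext (funext fun x => PresentedGroup.toGroup.of p.2)

variable {C : Type*} [CommGroup C]

lemma piRels_cond (c : ℤ) (f : Fin 3 → C) :
    (∀ r ∈ PiRels c 1 1 1, FreeGroup.lift f r = 1) ↔ (f 2) ^ c = 1 := by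
  constructor
  · intro h
    have h1 := h _ (Or.inl rfl)
    simp only [map_mul, map_zpow, map_inv, FreeGroup.lift_apply_of] at h1
    have : (f 2) ^ (-c) = 1 := by
      have := h1
      rw [mul_comm] at this
      calc (f 2) ^ (-c) = f 0 * f 1 * (f 0)⁻¹ * f 1 ^ (-(1:ℤ)) * f 2 ^ (-c) := by
            rw [mul_comm (f 0) (f 1)]; group
        _ = 1 := h1
    rw [← inv_inv ((f 2) ^ c), ← zpow_neg, this, inv_one]
  · rintro h r (rfl | rfl | rfl) <;>
      simp only [map_mul, map_zpow, map_inv, FreeGroup.lift_apply_of]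
    · have h' : f 2 ^ (-c) = 1 := by rw [zpow_neg (f 2) c, h, inv_one]
      rw [mul_comm (f 0) (f 1), h']; group
    · rw [mul_comm (f 0) (f 2)]; group
    · rw [mul_comm (f 1) (f 2)]; group

def condEquiv (c : ℤ) : {f : Fin 3 → C // (f 2) ^ c = 1} ≃ C × C × {z : C // z ^ c = 1} where
  toFun f := (f.1 0, f.1 1, ⟨f.1 2, f.2⟩)
  invFun p := ⟨![p.1, p.2.1, p.2.2.1], by simpa using p.2.2.2⟩
  left_inv f := by
    ext i
    fin_cases i <;> simp
  right_inv p := by simp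

lemma card_hom (c : ℤ) (n : ℕ) [NeZero n] :
    Nat.card (PiGroup c 1 1 1 →* Multiplicative (ZMod n)) =
      n * (n * Nat.card {z : Multiplicative (ZMod n) // z ^ c = 1}) := by
  have e := (homEquiv (PiRels c 1 1 1) (Multiplicative (ZMod n))).trans
    ((Equiv.subtypeEquivRight (piRels_cond c)).trans (condEquiv c))
  rw [Nat.card_congr e, Nat.card_prod, Nat.card_prod]
  congr 1
  · simp [Nat.card_eq_fintype_card]
  · congr 1
    simp [Nat.card_eq_fintype_card]
end count


section ker
variable (c : ℤ) (n : ℕ)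

def multEquiv : {z : Multiplicative (ZMod n) // z ^ c = 1} ≃
    {z : ZMod n // (c : ZMod n) * z = 0} :=
  Equiv.subtypeEquiv Multiplicative.toAdd (fun z => by
    constructor
    · intro h
      have := congrArg Multiplicative.toAdd h
      simpa [toAdd_zpow, zsmul_eq_mul] using this
    · intro h
      have h' : c • Multiplicative.toAdd z = 0 := by rwa [zsmul_eq_mul]
      exact Multiplicative.toAdd.injective (by simpa [toAdd_zpow] using h'))

lemma card_cond_iff [NeZero n] :
    Nat.card {z : ZMod n // (c : ZMod n) * z = 0} = n ↔ (n : ℤ) ∣ c := by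
  constructor
  · intro h
    set A := AddMonoidHom.ker (AddMonoidHom.mulLeft ((c : ZMod n))) with hA
    have e : {z : ZMod n // (c : ZMod n) * z = 0} ≃ A :=
      Equiv.subtypeEquivRight (fun z => by simp [hA, AddMonoidHom.mem_ker])
    have hcA : Nat.card A = Nat.card (ZMod n) := by
      rw [← Nat.card_congr e, h, Nat.card_zmod]
    have : A = ⊤ := AddSubgroup.eq_top_of_card_eq A hcA
    have h1 : (c : ZMod n) * 1 = 0 := by
      have : (1 : ZMod n) ∈ A := this ▸ AddSubgroup.mem_top 1
      simpa [hA, AddMonoidHom.mem_ker] using this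
    rw [mul_one] at h1
    exact (ZMod.intCast_zmod_eq_zero_iff_dvd c n).mp h1
  · intro h
    have h0 : (c : ZMod n) = 0 := (ZMod.intCast_zmod_eq_zero_iff_dvd c n).mpr h
    rw [show {z : ZMod n // (c : ZMod n) * z = 0} = {z : ZMod n // True} by simp [h0]]
    rw [Nat.card_congr (Equiv.subtypeUnivEquiv fun _ => trivial), Nat.card_zmod]

lemma card_hom' [NeZero n] :
    Nat.card (PiGroup c 1 1 1 →* Multiplicative (ZMod n)) =
      n * (n * Nat.card {z : ZMod n // (c : ZMod n) * z = 0}) := by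
  rw [card_hom c n, Nat.card_congr (multEquiv c n)]
end ker

lemma dvd_iff_of_iso {a b : ℤ} (e : PiGroup a 1 1 1 ≃* PiGroup b 1 1 1)
    (n : ℕ) (hn : n ≠ 0) : (n : ℤ) ∣ a → (n : ℤ) ∣ b := by
  intro ha
  haveI : NeZero n := ⟨hn⟩
  have hcard : Nat.card (PiGroup a 1 1 1 →* Multiplicative (ZMod n)) =
      Nat.card (PiGroup b 1 1 1 →* Multiplicative (ZMod n)) :=
    Nat.card_congr e.monoidHomCongrLeftEquiv
  rw [card_hom', card_hom'] at hcard
  have hpos : 0 < n := Nat.pos_of_ne_zero hn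
  have hK : Nat.card {z : ZMod n // (a : ZMod n) * z = 0} =
      Nat.card {z : ZMod n // (b : ZMod n) * z = 0} :=
    Nat.eq_of_mul_eq_mul_left hpos (Nat.eq_of_mul_eq_mul_left hpos hcard)
  exact (card_cond_iff b n).mp (by rw [← hK]; exact (card_cond_iff a n).mpr ha)

lemma natAbs_dvd_of_iso {a b : ℤ} (e : PiGroup a 1 1 1 ≃* PiGroup b 1 1 1) :
    a.natAbs ∣ b.natAbs := by
  by_cases hx : a = 0
  · subst hx
    have h := dvd_iff_of_iso e (b.natAbs + 1) (Nat.succ_ne_zero _) (dvd_zero _)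
    have : (b.natAbs + 1) ∣ b.natAbs := by
      have h2 := Int.natAbs_dvd_natAbs.mpr h
      rwa [Int.natAbs_natCast] at h2
    simpa using Nat.eq_zero_of_dvd_of_lt this (Nat.lt_succ_self _)
  · have h := dvd_iff_of_iso e a.natAbs (Int.natAbs_ne_zero.mpr hx)
      (Int.natAbs_dvd.mpr dvd_rfl)
    have := Int.natAbs_dvd_natAbs.mpr h
    simpa using this

/-- `Π(a, 1, 1, 1) ≅ Π(b, 1, 1, 1)` if and only if `|a| = |b|`. -/
theorem PiGroup_nil_iso_iff (a b : ℤ) :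
    Nonempty (PiGroup a 1 1 1 ≃* PiGroup b 1 1 1) ↔ |a| = |b| := by
  constructor
  · rintro ⟨e⟩
    have h1 := natAbs_dvd_of_iso e
    have h2 := natAbs_dvd_of_iso e.symm
    have := Nat.dvd_antisymm h1 h2
    rw [Int.abs_eq_natAbs, Int.abs_eq_natAbs, this]
  · intro h
    rcases abs_eq_abs.mp h with rfl | rfl
    · exact ⟨MulEquiv.refl _⟩
    · exact ⟨(negEquiv b).symm⟩
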